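/- EVAL-X optimality implies non-encoding (weak detection): in a finite probability space, if an explanation e achieves the optimal EVAL-X score, i.e. q(y|x) = q(y|x_v) for all v with P(e(x)=v) > 0 and all x in the support with e(x) = v, then for every such v and every a with P(x_v = a, e(x) = v) > 0, the label y is conditionally independent of the indicator E_v = 1[e(x) = v] given x_v = a. -/
import Mathlib


open scoped Classical

/-- Probability of an event under a probability mass function on a finite space. -/
noncomputable def Pr {Ω : Type*} [Fintype Ω] (p : Ω → ℝ) (E : Ω → Prop) : ℝ :=
  ∑ ω, if E ω then p ω else 0

/-- Conditional probability `P(A | B)`. -/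
noncomputable def cPr {Ω : Type*} [Fintype Ω] (p : Ω → ℝ) (A B : Ω → Prop) : ℝ :=
  Pr p (fun ω => A ω ∧ B ω) / Pr p B

/-- Conditional independence of a (finite-valued) random variable `y` and a binary
variable given by the event `E`, given the conditioning event `C`. -/
def CondIndepBin {Ω Y : Type*} [Fintype Ω] (p : Ω → ℝ) (y : Ω → Y) (E C : Ω → Prop) : Prop :=
  ∀ y₀ : Y,
    cPr p (fun ω => y ω = y₀ ∧ E ω) C
        = cPr p (fun ω => y ω = y₀) C * cPr p E C ∧
    cPr p (fun ω => y ω = y₀ ∧ ¬ E ω) C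
        = cPr p (fun ω => y ω = y₀) C * cPr p (fun ω => ¬ E ω) C

lemma Pr_nonneg {Ω : Type*} [Fintype Ω] (p : Ω → ℝ) (hp : ∀ ω, 0 ≤ p ω)
    (E : Ω → Prop) : 0 ≤ Pr p E :=
  Finset.sum_nonneg fun ω _ => by by_cases h : E ω <;> simp [h, hp ω]

lemma Pr_congr {Ω : Type*} [Fintype Ω] (p : Ω → ℝ) {E F : Ω → Prop}
    (h : ∀ ω, E ω ↔ F ω) : Pr p E = Pr p F :=
  Finset.sum_congr rfl fun ω _ => by rw [if_congr (h ω) rfl rfl]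

lemma Pr_mono {Ω : Type*} [Fintype Ω] (p : Ω → ℝ) (hp : ∀ ω, 0 ≤ p ω)
    {E F : Ω → Prop} (h : ∀ ω, E ω → F ω) : Pr p E ≤ Pr p F := by
  refine Finset.sum_le_sum fun ω _ => ?_
  by_cases hE : E ω
  · simp [hE, h ω hE]
  · by_cases hF : F ω <;> simp [hE, hF, hp ω]


lemma Pr_false {Ω : Type*} [Fintype Ω] (p : Ω → ℝ) : Pr p (fun _ => False) = 0 := by
  unfold Pr; simp

lemma Pr_fiberwise {Ω β : Type*} [Fintype Ω] (p : Ω → ℝ) (g : Ω → β) (Q : Ω → Prop) :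
    Pr p Q = ∑ b ∈ Finset.univ.image g, Pr p (fun ω => Q ω ∧ g ω = b) := by
  unfold Pr
  rw [← Finset.sum_fiberwise_of_maps_to (s := Finset.univ) (t := Finset.univ.image g)
      (g := g) (fun ω _ => Finset.mem_image_of_mem g (Finset.mem_univ ω))
      (fun ω => if Q ω then p ω else 0)]
  refine Finset.sum_congr rfl fun b _ => ?_
  rw [Finset.sum_filter]
  refine Finset.sum_congr rfl fun ω _ => ?_
  split_ifs <;> first | rfl | tauto

lemma Pr_split {Ω : Type*} [Fintype Ω] (p : Ω → ℝ) (A B : Ω → Prop) :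
    Pr p A = Pr p (fun ω => A ω ∧ B ω) + Pr p (fun ω => A ω ∧ ¬ B ω) := by
  unfold Pr
  rw [← Finset.sum_add_distrib]
  refine Finset.sum_congr rfl fun ω _ => ?_
  split_ifs <;>
    first
      | ring1
      | exact absurd ‹(fun ω => A ω ∧ B ω) ω›.2 ‹(fun ω => A ω ∧ ¬ B ω) ω›.2
      | exact absurd ‹(fun ω => A ω ∧ B ω) ω›.1 ‹¬ A ω›
      | exact absurd ‹(fun ω => A ω ∧ ¬ B ω) ω›.1 ‹¬ A ω›
      | (rcases Classical.em (B ω) with hB | hB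
         · exact absurd ⟨‹A ω›, hB⟩ ‹¬ (fun ω => A ω ∧ B ω) ω›
         · exact absurd ⟨‹A ω›, hB⟩ ‹¬ (fun ω => A ω ∧ ¬ B ω) ω›)

/-- EVAL-X optimality implies non-encoding (weak detection): if on the
support `q(y|x) = q(y|x_{e(x)})`, then for every mask `v` and value `a` with
`P(x_v = a, e(x) = v) > 0`, the label `y` is conditionally independent of the indicator
`E_v = 1[e(x) = v]` given `x_v = a`. -/
theorem evalx_optimal_implies_nonencoding
    {Ω A Y : Type*} [Fintype Ω] [Fintype Y] {d : ℕ}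
    (p : Ω → ℝ) (hp : ∀ ω, 0 ≤ p ω) (hsum : ∑ ω, p ω = 1)
    (x : Ω → Fin d → A) (y : Ω → Y)
    (e : (Fin d → A) → (Fin d → Bool))
    (hopt : ∀ ω, 0 < p ω → ∀ y₀ : Y,
      cPr p (fun ω' => y ω' = y₀) (fun ω' => x ω' = x ω)
        = cPr p (fun ω' => y ω' = y₀)
            (fun ω' => ∀ i, e (x ω) i = true → x ω' i = x ω i)) :
    ∀ (v : Fin d → Bool) (a : Fin d → A),
      0 < Pr p (fun ω => (∀ i, v i = true → x ω i = a i) ∧ e (x ω) = v) →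
      CondIndepBin p y (fun ω => e (x ω) = v)
        (fun ω => ∀ i, v i = true → x ω i = a i) := by
  intro v a hpos
  set C : Ω → Prop := fun ω => ∀ i, v i = true → x ω i = a i with hCdef
  set E : Ω → Prop := fun ω => e (x ω) = v with hEdef
  have hposEC : 0 < Pr p (fun ω => E ω ∧ C ω) :=
    lt_of_lt_of_le hpos (le_of_eq (Pr_congr p fun ω => and_comm))
  have hPC : 0 < Pr p C :=
    lt_of_lt_of_le hposEC (Pr_mono p hp fun ω h => h.2)
  intro y₀
  set c := cPr p (fun ω => y ω = y₀) C with hcdef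
  -- per-fiber identity
  have key : ∀ b : Fin d → A, e b = v → (∀ i, v i = true → b i = a i) →
      Pr p (fun ω => y ω = y₀ ∧ x ω = b) = c * Pr p (fun ω => x ω = b) := by
    intro b heb hba
    by_cases h0 : Pr p (fun ω => x ω = b) = 0
    · rw [h0, mul_zero]
      have hle : Pr p (fun ω => y ω = y₀ ∧ x ω = b) ≤ Pr p (fun ω => x ω = b) :=
        Pr_mono p hp fun ω h => h.2
      have hge := Pr_nonneg p hp (fun ω => y ω = y₀ ∧ x ω = b)
      linarith
    · obtain ⟨ω₀, -, hω₀⟩ := Finset.exists_ne_zero_of_sum_ne_zero h0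
      have hxb : x ω₀ = b := by by_contra hxb; simp [hxb] at hω₀
      rw [if_pos hxb] at hω₀
      have hp0 : 0 < p ω₀ := lt_of_le_of_ne (hp ω₀) (Ne.symm hω₀)
      have h1 := hopt ω₀ hp0 y₀
      rw [hxb] at h1
      have hiff : ∀ ω' : Ω, ((∀ i, e b i = true → x ω' i = b i) ↔ C ω') := by
        intro ω'
        rw [heb]
        constructor
        · intro h i hi; rw [← hba i hi]; exact h i hi
        · intro h i hi; rw [hba i hi]; exact h i hi
      have h2 : cPr p (fun ω' => y ω' = y₀) (fun ω' => x ω' = b) = c := by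
        rw [h1, hcdef]
        unfold cPr
        rw [Pr_congr p (fun ω' => and_congr Iff.rfl (hiff ω')), Pr_congr p hiff]
      unfold cPr at h2
      exact (div_eq_iff h0).mp h2
  -- fiberwise decomposition
  set T : Finset (Fin d → A) := Finset.univ.image x with hTdef
  have decomp : ∀ Q : Ω → Prop,
      Pr p (fun ω => Q ω ∧ E ω ∧ C ω)
        = ∑ b ∈ T, if e b = v ∧ (∀ i, v i = true → b i = a i)
            then Pr p (fun ω => Q ω ∧ x ω = b) else 0 := by
    intro Q
    rw [Pr_fiberwise p x (fun ω => Q ω ∧ E ω ∧ C ω)]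
    refine Finset.sum_congr (Finset.ext fun b => by
      simp only [hTdef, Finset.mem_image, Finset.mem_univ, true_and]) fun b hb => ?_
    by_cases hP : e b = v ∧ (∀ i, v i = true → b i = a i)
    · rw [if_pos hP]
      refine Pr_congr p fun ω => ?_
      constructor
      · rintro ⟨⟨hQ, -, -⟩, hx⟩; exact ⟨hQ, hx⟩
      · rintro ⟨hQ, hx⟩
        refine ⟨⟨hQ, ?_, fun i hi => ?_⟩, hx⟩
        · show e (x ω) = v; rw [hx]; exact hP.1
        · rw [hx]; exact hP.2 i hi
    · rw [if_neg hP]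
      have hFalse : ∀ ω, ((Q ω ∧ E ω ∧ C ω) ∧ x ω = b) ↔ False := by
        intro ω
        constructor
        · rintro ⟨⟨-, hE2, hC2⟩, hx⟩
          exact hP ⟨by rw [← hx]; exact hE2, fun i hi => by rw [← hx]; exact hC2 i hi⟩
        · exact False.elim
      rw [Pr_congr p hFalse, Pr_false]
  have hECdec : Pr p (fun ω => E ω ∧ C ω)
      = ∑ b ∈ T, if e b = v ∧ (∀ i, v i = true → b i = a i)
          then Pr p (fun ω => x ω = b) else 0 := by
    have h := decomp (fun _ => True)
    rw [Pr_congr p (fun ω => (Iff.of_eq (true_and (E ω ∧ C ω))).symm), h]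
    refine Finset.sum_congr rfl fun b hb => ?_
    by_cases hP : e b = v ∧ (∀ i, v i = true → b i = a i)
    · rw [if_pos hP, if_pos hP, Pr_congr p (fun ω => Iff.of_eq (true_and (x ω = b)))]
    · rw [if_neg hP, if_neg hP]
  have hmain : Pr p (fun ω => y ω = y₀ ∧ E ω ∧ C ω) = c * Pr p (fun ω => E ω ∧ C ω) := by
    rw [decomp (fun ω => y ω = y₀), hECdec, Finset.mul_sum]
    refine Finset.sum_congr rfl fun b hb => ?_
    by_cases hP : e b = v ∧ (∀ i, v i = true → b i = a i)
    · simp only [if_pos hP]; exact key b hP.1 hP.2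
    · simp only [if_neg hP, mul_zero]
  have hPCne : Pr p C ≠ 0 := ne_of_gt hPC
  have hcval : Pr p (fun ω => y ω = y₀ ∧ C ω) = c * Pr p C := by
    rw [hcdef]; unfold cPr; rw [div_mul_cancel₀ _ hPCne]
  constructor
  · -- first conjunct
    show cPr p (fun ω => y ω = y₀ ∧ E ω) C = c * cPr p E C
    unfold cPr
    rw [Pr_congr p (fun ω => and_assoc (a := y ω = y₀) (b := E ω) (c := C ω)), hmain]
    exact mul_div_assoc _ _ _
  · -- second conjunct
    show cPr p (fun ω => y ω = y₀ ∧ ¬ E ω) C = c * cPr p (fun ω => ¬ E ω) C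
    unfold cPr
    have hsplitA : Pr p (fun ω => (y ω = y₀ ∧ ¬ E ω) ∧ C ω)
        = Pr p (fun ω => y ω = y₀ ∧ C ω) - Pr p (fun ω => y ω = y₀ ∧ E ω ∧ C ω) := by
      have h : Pr p (fun ω => y ω = y₀ ∧ C ω)
          = Pr p (fun ω => (y ω = y₀ ∧ C ω) ∧ E ω)
            + Pr p (fun ω => (y ω = y₀ ∧ C ω) ∧ ¬ E ω) :=
        Pr_split p (fun ω => y ω = y₀ ∧ C ω) E
      have h1 : Pr p (fun ω => (y ω = y₀ ∧ C ω) ∧ E ω)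
          = Pr p (fun ω => y ω = y₀ ∧ E ω ∧ C ω) := Pr_congr p fun ω => by tauto
      have h2 : Pr p (fun ω => (y ω = y₀ ∧ C ω) ∧ ¬ E ω)
          = Pr p (fun ω => (y ω = y₀ ∧ ¬ E ω) ∧ C ω) := Pr_congr p fun ω => by tauto
      rw [h1, h2] at h
      linarith
    have hsplitE : Pr p (fun ω => ¬ E ω ∧ C ω)
        = Pr p C - Pr p (fun ω => E ω ∧ C ω) := by
      have h : Pr p C = Pr p (fun ω => C ω ∧ E ω) + Pr p (fun ω => C ω ∧ ¬ E ω) :=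
        Pr_split p C E
      have h1 : Pr p (fun ω => C ω ∧ E ω) = Pr p (fun ω => E ω ∧ C ω) :=
        Pr_congr p fun ω => and_comm
      have h2 : Pr p (fun ω => C ω ∧ ¬ E ω) = Pr p (fun ω => ¬ E ω ∧ C ω) :=
        Pr_congr p fun ω => and_comm
      rw [h1, h2] at h
      linarith
    rw [hsplitA, hsplitE, hmain, hcval]
    rw [← mul_sub, mul_div_assoc]
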